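/- For r ≥ 2 and T = {(1^(1), 2^(2)), (2^(2), 1^(1))}, the count p_n = |E_n^r(T)| satisfies p_n = n(r−1) p_{n−1} + n! (r−1)^{n−1} for n ≥ 1 with p_0 = 1, and hence p_n = n!(n + r − 1)(r−1)^{n−1} for n ≥ 1. -/

import Mathlib

open Finset Equiv

/-- A signed permutation of length `n` with `r` signs: a permutation of `Fin n`
together with a sign in `Fin r` attached to each position. -/
abbrev SignedPerm (n r : ℕ) := Equiv.Perm (Fin n) × (Fin n → Fin r)

/-- `SPContains p x` : the signed permutation `x` contains the signed pattern `p`,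
i.e. there is an increasing sequence of positions on which the symbols of `x` are
order-isomorphic to the symbols of `p` and the signs match exactly. -/
def SPContains {k n r : ℕ} (p : SignedPerm k r) (x : SignedPerm n r) : Prop :=
  ∃ f : Fin k → Fin n, StrictMono f ∧
    (∀ i j : Fin k, p.1 i < p.1 j ↔ x.1 (f i) < x.1 (f j)) ∧
    (∀ i : Fin k, x.2 (f i) = p.2 i)

/-- Classical (unsigned) pattern containment for permutations. -/
def PContains {k m : ℕ} (τ : Equiv.Perm (Fin k)) (σ : Equiv.Perm (Fin m)) : Prop :=
  ∃ f : Fin k → Fin m, StrictMono f ∧ ∀ i j : Fin k, τ i < τ j ↔ σ (f i) < σ (f j)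

section AuxSP
variable {r : ℕ}

def Qp (hr : 2 ≤ r) {n : ℕ} (g : Fin n → Fin r) : Prop :=
  ∀ v w, g v = ⟨0, Nat.zero_lt_of_lt hr⟩ → g w = ⟨1, hr⟩ → w < v

def splitEquiv (hr : 2 ≤ r) (n : ℕ) :
    {g : Fin (n+1) → Fin r // Qp hr g} ≃
      (Fin n → {s : Fin r // s ≠ ⟨1, hr⟩}) ⊕
      ({s : Fin r // s ≠ (⟨0, Nat.zero_lt_of_lt hr⟩ : Fin r)} × {g : Fin n → Fin r // Qp hr g}) where
  toFun g :=
    if h : g.1 0 = ⟨0, Nat.zero_lt_of_lt hr⟩ then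
      Sum.inl (fun i => ⟨g.1 i.succ, fun ho => by
        have := g.2 0 i.succ h ho
        exact absurd this (Fin.not_lt_zero _)⟩)
    else
      Sum.inr ⟨⟨g.1 0, h⟩, ⟨fun i => g.1 i.succ, fun v w hv hw => by
        simpa using g.2 v.succ w.succ hv hw⟩⟩
  invFun s :=
    match s with
    | Sum.inl h => ⟨Fin.cons ⟨0, Nat.zero_lt_of_lt hr⟩ (fun i => (h i).1), by
        intro v w hv hw
        exfalso
        rcases Fin.eq_zero_or_eq_succ w with rfl | ⟨j, rfl⟩
        · rw [Fin.cons_zero] at hw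
          exact absurd (congrArg Fin.val hw) (by simp)
        · rw [Fin.cons_succ] at hw
          exact (h j).2 hw⟩
    | Sum.inr ⟨s, g⟩ => ⟨Fin.cons s.1 g.1, by
        intro v w hv hw
        rcases Fin.eq_zero_or_eq_succ v with rfl | ⟨a, rfl⟩
        · rw [Fin.cons_zero] at hv; exact absurd hv s.2
        rcases Fin.eq_zero_or_eq_succ w with rfl | ⟨b, rfl⟩
        · exact Fin.succ_pos a
        · rw [Fin.cons_succ] at hv hw
          exact Fin.succ_lt_succ_iff.mpr (g.2 a b hv hw)⟩
  left_inv g := by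
    rcases g with ⟨g, hg⟩
    by_cases h : g 0 = (⟨0, Nat.zero_lt_of_lt hr⟩ : Fin r)
    · simp only [dif_pos h]
      refine Subtype.ext (funext fun j => ?_)
      show (Fin.cons ⟨0, Nat.zero_lt_of_lt hr⟩ fun i => g i.succ : Fin (n+1) → Fin r) j = g j
      rcases Fin.eq_zero_or_eq_succ j with rfl | ⟨i, rfl⟩
      · rw [Fin.cons_zero, h]
      · rw [Fin.cons_succ]
    · simp only [dif_neg h]
      exact Subtype.ext (Fin.cons_self_tail g)
  right_inv s := by
    rcases s with h | ⟨s, g⟩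
    · simp only [Fin.cons_zero, dif_pos]
      congr 1
    · have hs : (Fin.cons s.1 g.1 : Fin (n+1) → Fin r) 0 ≠ ⟨0, Nat.zero_lt_of_lt hr⟩ := by
        rw [Fin.cons_zero]; exact s.2
      simp only [dif_neg hs]
      congr 1

lemma card_ne (a : Fin r) : Nat.card {s : Fin r // s ≠ a} = r - 1 := by
  classical
  rw [Nat.card_eq_fintype_card, Fintype.card_subtype_compl,
    Fintype.card_subtype_eq, Fintype.card_fin]

/-- number of valid words of length `n`. -/
noncomputable def cQ (hr : 2 ≤ r) (n : ℕ) : ℕ := Nat.card {g : Fin n → Fin r // Qp hr g}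

lemma cQ_zero (hr : 2 ≤ r) : cQ hr 0 = 1 := by
  have : Unique {g : Fin 0 → Fin r // Qp hr g} :=
    ⟨⟨⟨finZeroElim, fun v => v.elim0⟩⟩, fun a => Subtype.ext (funext fun i => i.elim0)⟩
  exact Nat.card_unique

lemma cQ_succ (hr : 2 ≤ r) (n : ℕ) :
    cQ hr (n + 1) = (r - 1) ^ n + (r - 1) * cQ hr n := by
  rw [cQ, Nat.card_congr (splitEquiv hr n), Nat.card_sum, Nat.card_prod,
    Nat.card_fun, card_ne, card_ne, Nat.card_eq_fintype_card, Fintype.card_fin, cQ]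

lemma cQ_formula (hr : 2 ≤ r) (n : ℕ) (hn : 1 ≤ n) :
    cQ hr n = (n + r - 1) * (r - 1) ^ (n - 1) := by
  induction n with
  | zero => omega
  | succ m ih =>
    rcases Nat.eq_zero_or_pos m with rfl | hm
    · rw [cQ_succ, cQ_zero]
      simp
      omega
    · rw [cQ_succ, ih hm]
      have h1 : m + 1 - 1 = m := rfl
      have h2 : (r - 1) * ((m + r - 1) * (r - 1) ^ (m - 1)) = (m + r - 1) * (r - 1) ^ m := by
        obtain ⟨k, rfl⟩ : ∃ k, m = k + 1 := ⟨m - 1, by omega⟩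
        simp only [Nat.succ_sub_one, pow_succ]
        ring
      rw [h2, h1]
      have h3 : (r-1)^m + (m + r - 1) * (r-1)^m = (m + 1 + r - 1) * (r-1)^m := by
        have : m + 1 + r - 1 = (m + r - 1) + 1 := by omega
        rw [this, add_mul, one_mul, add_comm]
      rw [h3]

lemma card_avoid (hr : 2 ≤ r) (n : ℕ) :
    Nat.card {x : SignedPerm n r //
      ∀ a b, x.2 a = ⟨0, Nat.zero_lt_of_lt hr⟩ → x.2 b = ⟨1, hr⟩ → x.1 b < x.1 a} =
      n.factorial * cQ hr n := by
  have e : {x : SignedPerm n r //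
      ∀ a b, x.2 a = ⟨0, Nat.zero_lt_of_lt hr⟩ → x.2 b = ⟨1, hr⟩ → x.1 b < x.1 a} ≃
      Equiv.Perm (Fin n) × {g : Fin n → Fin r // Qp hr g} :=
    { toFun := fun x => (x.1.1, ⟨x.1.2 ∘ x.1.1.symm, fun v w hv hw => by
        simpa using x.2 (x.1.1.symm v) (x.1.1.symm w) hv hw⟩)
      invFun := fun sg => ⟨(sg.1, sg.2.1 ∘ sg.1), fun a b ha hb =>
        sg.2.2 (sg.1 a) (sg.1 b) ha hb⟩
      left_inv := fun x => by
        refine Subtype.ext (Prod.ext rfl (funext fun a => ?_))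
        simp
      right_inv := fun sg => by
        refine Prod.ext rfl (Subtype.ext (funext fun v => ?_))
        simp }
  rw [Nat.card_congr e, Nat.card_prod, Nat.card_eq_fintype_card, Fintype.card_perm,
    Fintype.card_fin, cQ]

lemma avoid_iff (hr : 2 ≤ r) {n : ℕ} (x : SignedPerm n r) :
    (¬ SPContains ((1 : Equiv.Perm (Fin 2)),
        ![(⟨0, Nat.zero_lt_of_lt hr⟩ : Fin r), ⟨1, hr⟩]) x ∧
     ¬ SPContains (Equiv.swap 0 1,
        ![(⟨1, hr⟩ : Fin r), ⟨0, Nat.zero_lt_of_lt hr⟩]) x) ↔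
    (∀ a b, x.2 a = ⟨0, Nat.zero_lt_of_lt hr⟩ → x.2 b = ⟨1, hr⟩ → x.1 b < x.1 a) := by
  obtain ⟨σ, ε⟩ := x
  dsimp only
  constructor
  · rintro ⟨h1, h2⟩ a b ha hb
    by_contra hba
    have hab : a ≠ b := by rintro rfl; rw [ha] at hb; exact absurd (Fin.mk.injEq .. ▸ hb) (by simp)
    have hσ : σ a < σ b := by
      rcases lt_or_ge (σ a) (σ b) with h | h
      · exact h
      · rcases lt_or_eq_of_le h with h | h
        · exact absurd h hba
        · exact absurd (σ.injective h.symm) hab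
    rcases lt_or_gt_of_ne hab with hlt | hgt
    · exact h1 ⟨![a, b], by
        refine ⟨?_, ?_, ?_⟩
        · intro i j hij
          fin_cases i <;> fin_cases j <;> simp_all
        · intro i j
          fin_cases i <;> fin_cases j <;>
            simp [Perm.one_apply] <;> omega
        · intro i; fin_cases i <;> simpa using ‹_›⟩
    · exact h2 ⟨![b, a], by
        refine ⟨?_, ?_, ?_⟩
        · intro i j hij
          fin_cases i <;> fin_cases j <;> simp_all
        · intro i j
          fin_cases i <;> fin_cases j <;>
            simp [Equiv.swap_apply_left, Equiv.swap_apply_right] <;> omega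
        · intro i; fin_cases i <;> simpa using ‹_›⟩
  · intro h
    constructor
    · rintro ⟨f, hf, hiff, hsign⟩
      have h01 : σ (f 0) < σ (f 1) := by
        have := (hiff 0 1).mp (by simp [Perm.one_apply])
        exact this
      have := h (f 0) (f 1) (by simpa using hsign 0) (by simpa using hsign 1)
      omega
    · rintro ⟨f, hf, hiff, hsign⟩
      have h10 : σ (f 1) < σ (f 0) := by
        have := (hiff 1 0).mp (by simp)
        exact this
      have := h (f 1) (f 0) (by simpa using hsign 1) (by simpa using hsign 0)
      omega

end AuxSP

/-- for `T = {(1^(1),2^(2)), (2^(2),1^(1))}`, the count `p_n`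
satisfies `p_n = n(r-1)p_{n-1} + n!(r-1)^{n-1}` and equals
`n!(n+r-1)(r-1)^{n-1}` for `n ≥ 1`, with `p_0 = 1`. -/
theorem recurrence_case_iv (r : ℕ) (hr : 2 ≤ r) (p : ℕ → ℕ)
    (hp : ∀ n, p n = Nat.card {x : SignedPerm n r //
        ¬ SPContains ((1 : Equiv.Perm (Fin 2)),
            ![(⟨0, by omega⟩ : Fin r), ⟨1, hr⟩]) x ∧
        ¬ SPContains (Equiv.swap 0 1,
            ![(⟨1, hr⟩ : Fin r), ⟨0, by omega⟩]) x}) :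
    p 0 = 1 ∧ ∀ n, 1 ≤ n →
      p n = n * (r - 1) * p (n - 1) + n.factorial * (r - 1) ^ (n - 1) ∧
      p n = n.factorial * (n + r - 1) * (r - 1) ^ (n - 1) := by
  have hp' : ∀ n, p n = n.factorial * cQ hr n := by
    intro n
    rw [hp n, ← card_avoid hr n]
    exact Nat.card_congr (Equiv.subtypeEquivRight (fun x => avoid_iff hr x))
  refine ⟨by rw [hp' 0, cQ_zero]; rfl, ?_⟩
  intro n hn
  obtain ⟨m, rfl⟩ : ∃ m, n = m + 1 := ⟨n - 1, by omega⟩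
  simp only [Nat.add_sub_cancel]
  constructor
  · rw [hp', hp', cQ_succ, Nat.factorial_succ]
    ring
  · rw [hp', cQ_formula hr _ (by omega), Nat.factorial_succ]
    simp only [Nat.add_sub_cancel]
    ring
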